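/- Certified edit-distance robustness for length-dependent deletion: Let ψ : ℕ → (0,1) be a length-dependent deletion-probability function, f̄ : X → Y a base classifier, x ∈ X, y₁ ∈ Y, r ∈ ℕ and o ⊆ {del, ins, sub}. For μ ∈ ℝ, lengths n, ñ ∈ ℕ and an LCS length L ≤ min(n, ñ), let lb(μ, n, ñ, L, ψ₁, ψ₂) denote the lower bound of the variable-rate deletion lemma (with W := μ − 1 + ψ₁^{n−L}; if ψ₁ ≥ ψ₂, H★ := min{h : Σ_{i=0}^{h} B(L,ψ₁,i) ≥ W} and lb := (ψ₂^{ñ−L}/ψ₁^{n−L})·(Σ_{i=0}^{H★−1} B(L,ψ₂,i) + B(L,ψ₂,H★)·⌊(W − Σ_{j=0}^{H★−1}B(L,ψ₁,j))/B(L,ψ₁,H★)⌋_{C(L,H★)^{−1}}); if ψ₁ < ψ₂, H★ := max{h : Σ_{i=h}^{L} B(L,ψ₁,i) ≥ W} and lb uses the sums over i = H★+1,…,L instead), and let ub(μ, n, ñ, L, ψ₁, ψ₂) denote the corresponding upper bound (if ψ₁ ≤ ψ₂, H★ := min{H : Σ_{i=0}^{H} B(L,ψ₁,i) ≥ μ}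 and ub := (ψ₂^{ñ−L}/ψ₁^{n−L})·(Σ_{i=0}^{H★−1} B(L,ψ₂,i) + B(L,ψ₂,H★)·⌈(μ − Σ_{j=0}^{H★−1}B(L,ψ₁,j))/B(L,ψ₁,H★)⌉_{C(L,H★)^{−1}}) + 1 − ψ₂^{ñ−L}; if ψ₁ > ψ₂, H★ := max{H : Σ_{i=H}^{L} B(L,ψ₁,i) ≥ μ} with sums over i = H★+1,…,L). Suppose that for every x̃ ∈ X with dist_o(x → x̃) ≤ r, writing L for the length of a longest common subsequence of x and x̃, and for every y ≠ y₁: lb(p_{y₁}(x; f̄, ψ(|x|)), |x|, |x̃|, L, ψ(|x|), ψ(|x̃|)) > ub(p_y(x; f̄, ψ(|x|)), |x|, |x̃|, L, ψ(|x|), ψ(|x̃|)). Then for every x̃ ∈ X with dist_o(x → x̃) ≤ r and every y ≠ y₁, p_{y₁}(x̃; f̄, ψ(|x̃|)) > p_y(x̃; f̄, ψ(|x̃|)); in particular the smoothed classifier's prediction is y₁ on the whole edit-distance ball B_r(x; o). -/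

import Mathlib

/-- Apply a deletion indicator: keep the tokens at positions `i` with `ε i = true`, in order. -/
def applyDel {Ω : Type*} (x : List Ω) (ε : Fin x.length → Bool) : List Ω :=
  (List.finRange x.length).filterMap fun i => if ε i then some (x.get i) else none

/-- Number of retained tokens `|ε|`. -/
def retained {n : ℕ} (ε : Fin n → Bool) : ℕ :=
  (Finset.univ.filter fun i => ε i = true).card

/-- `q_ψ(ε|x) = ψ^{|x|-|ε|} (1-ψ)^{|ε|}`. -/
noncomputable def qdel {Ω : Type*} (ψ : ℝ) (x : List Ω) (ε : Fin x.length → Bool) : ℝ :=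
  ψ ^ (x.length - retained ε) * (1 - ψ) ^ (retained ε)

/-- The score `s_{f̄,ψ}(ε, x) = q_ψ(ε|x)·1[f̄(apply(x,ε)) = y]`. -/
noncomputable def score {Ω Y : Type*} [DecidableEq Y] (f : List Ω → Y) (y : Y) (ψ : ℝ)
    (x : List Ω) (ε : Fin x.length → Bool) : ℝ :=
  qdel ψ x ε * (if f (applyDel x ε) = y then 1 else 0)

/-- The smoothed class probability `p_y(x; f̄, ψ) = Σ_{ε ∈ E(x)} s_{f̄,ψ}(ε, x)`. -/
noncomputable def smoothedProb {Ω Y : Type*} [DecidableEq Y] (f : List Ω → Y) (y : Y)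
    (ψ : ℝ) (x : List Ω) : ℝ :=
  ∑ ε : Fin x.length → Bool, score f y ψ x ε

/-- `z` is a longest common subsequence of `x` and `x̃`. -/
def IsLCS {Ω : Type*} (z x xt : List Ω) : Prop :=
  z.Sublist x ∧ z.Sublist xt ∧ ∀ w : List Ω, w.Sublist x → w.Sublist xt → w.length ≤ z.length

/-- The binomial pmf `B(n, p, k) = C(n,k)·(1−p)^k·p^{n−k}`. -/
noncomputable def binomPMF (n : ℕ) (p : ℝ) (k : ℕ) : ℝ :=
  (n.choose k : ℝ) * (1 - p) ^ k * p ^ (n - k)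

/-- Gridded floor `⌊a⌋_v = v·⌊a/v⌋`. -/
noncomputable def gfloor (a v : ℝ) : ℝ := v * (⌊a / v⌋ : ℤ)

/-- Gridded ceiling `⌈a⌉_v = v·⌈a/v⌉`. -/
noncomputable def gceil (a v : ℝ) : ℝ := v * (⌈a / v⌉ : ℤ)

/-- The three kinds of single-token edit operations. -/
inductive EditOp : Type
  | del | ins | sub
deriving DecidableEq

/-- A single edit step using an operation allowed by `o`. -/
def EditStep {Ω : Type*} (o : Set EditOp) (x y : List Ω) : Prop :=
  (EditOp.del ∈ o ∧ ∃ (l r : List Ω) (a : Ω), x = l ++ a :: r ∧ y = l ++ r) ∨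
  (EditOp.ins ∈ o ∧ ∃ (l r : List Ω) (a : Ω), x = l ++ r ∧ y = l ++ a :: r) ∨
  (EditOp.sub ∈ o ∧ ∃ (l r : List Ω) (a b : Ω), x = l ++ a :: r ∧ y = l ++ b :: r)

/-- `EditWithin o r x y` holds iff `y` can be obtained from `x` by at most `r` edit
operations from `o`, i.e. `dist_o(x → y) ≤ r`. -/
def EditWithin {Ω : Type*} (o : Set EditOp) : ℕ → List Ω → List Ω → Prop
  | 0, x, y => x = y
  | n + 1, x, y => x = y ∨ ∃ z, EditStep o x z ∧ EditWithin o n z y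

/-- The lower bound `lb(μ, n, ñ, L, ψ₁, ψ₂)` of the variable-rate deletion lemma. -/
noncomputable def lb (μ : ℝ) (n nt L : ℕ) (ψ₁ ψ₂ : ℝ) : ℝ :=
  let W : ℝ := μ - 1 + ψ₁ ^ (n - L)
  if ψ₂ ≤ ψ₁ then
    let H : ℕ := sInf {h | h ≤ L ∧ W ≤ ∑ i ∈ Finset.range (h + 1), binomPMF L ψ₁ i}
    ψ₂ ^ (nt - L) / ψ₁ ^ (n - L) *
      (∑ i ∈ Finset.range H, binomPMF L ψ₂ i +
        binomPMF L ψ₂ H *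
          gfloor ((W - ∑ j ∈ Finset.range H, binomPMF L ψ₁ j) / binomPMF L ψ₁ H)
            ((L.choose H : ℝ)⁻¹))
  else
    let H : ℕ := sSup {h | h ≤ L ∧ W ≤ ∑ i ∈ Finset.Icc h L, binomPMF L ψ₁ i}
    ψ₂ ^ (nt - L) / ψ₁ ^ (n - L) *
      (∑ i ∈ Finset.Icc (H + 1) L, binomPMF L ψ₂ i +
        binomPMF L ψ₂ H *
          gfloor ((W - ∑ j ∈ Finset.Icc (H + 1) L, binomPMF L ψ₁ j) / binomPMF L ψ₁ H)
            ((L.choose H : ℝ)⁻¹))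

/-- The upper bound `ub(μ, n, ñ, L, ψ₁, ψ₂)` of the variable-rate deletion lemma. -/
noncomputable def ub (μ : ℝ) (n nt L : ℕ) (ψ₁ ψ₂ : ℝ) : ℝ :=
  if ψ₁ ≤ ψ₂ then
    let H : ℕ := sInf {h | h ≤ L ∧ μ ≤ ∑ i ∈ Finset.range (h + 1), binomPMF L ψ₁ i}
    ψ₂ ^ (nt - L) / ψ₁ ^ (n - L) *
      (∑ i ∈ Finset.range H, binomPMF L ψ₂ i +
        binomPMF L ψ₂ H *
          gceil ((μ - ∑ j ∈ Finset.range H, binomPMF L ψ₁ j) / binomPMF L ψ₁ H)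
            ((L.choose H : ℝ)⁻¹)) +
      1 - ψ₂ ^ (nt - L)
  else
    let H : ℕ := sSup {h | h ≤ L ∧ μ ≤ ∑ i ∈ Finset.Icc h L, binomPMF L ψ₁ i}
    ψ₂ ^ (nt - L) / ψ₁ ^ (n - L) *
      (∑ i ∈ Finset.Icc (H + 1) L, binomPMF L ψ₂ i +
        binomPMF L ψ₂ H *
          gceil ((μ - ∑ j ∈ Finset.Icc (H + 1) L, binomPMF L ψ₁ j) / binomPMF L ψ₁ H)
            ((L.choose H : ℝ)⁻¹)) +
      1 - ψ₂ ^ (nt - L)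

namespace Stmt16

noncomputable def nu (ψ : ℝ) (L : ℕ) (δ : Fin L → Bool) : ℝ :=
  ψ ^ (L - retained δ) * (1 - ψ) ^ retained δ

lemma retained_le {n : ℕ} (ε : Fin n → Bool) : retained ε ≤ n := by
  classical
  simpa [retained] using (Finset.card_filter_le Finset.univ fun i => ε i = true)

lemma nu_nonneg {ψ : ℝ} (h0 : 0 ≤ ψ) (h1 : ψ ≤ 1) (L : ℕ) (δ : Fin L → Bool) :
    0 ≤ nu ψ L δ := by
  have h2 : (0:ℝ) ≤ 1 - ψ := by linarith
  exact mul_nonneg (pow_nonneg h0 _) (pow_nonneg h2 _)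

lemma card_lev (L i : ℕ) :
    (Finset.univ.filter fun δ : Fin L → Bool => retained δ = i).card = L.choose i := by
  classical
  have h : ((Finset.univ : Finset (Fin L)).powersetCard i).card = L.choose i := by
    rw [Finset.card_powersetCard, Finset.card_univ, Fintype.card_fin]
  rw [← h]
  apply Finset.card_bij (fun δ _ => Finset.univ.filter fun j => δ j = true)
  · intro δ hδ
    simp only [Finset.mem_filter, Finset.mem_univ, true_and] at hδ
    simp [Finset.mem_powersetCard, ← hδ, retained]
  · intro δ₁ h₁ δ₂ h₂ h
    funext j
    have := Finset.ext_iff.1 h j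
    simp only [Finset.mem_filter, Finset.mem_univ, true_and] at this
    cases hb : δ₁ j <;> cases hb2 : δ₂ j <;> simp_all
  · intro s hs
    simp only [Finset.mem_powersetCard] at hs
    refine ⟨fun j => j ∈ s, ?_, ?_⟩
    · simp only [Finset.mem_filter, Finset.mem_univ, true_and, retained]
      simp [retained, ← hs.2]
    · ext j; simp

lemma sum_nu_level (ψ : ℝ) (L i : ℕ) :
    ∑ δ ∈ Finset.univ.filter fun δ : Fin L → Bool => retained δ = i, nu ψ L δ
      = binomPMF L ψ i := by
  classical
  rw [Finset.sum_congr rfl (g := fun _ => ψ ^ (L - i) * (1-ψ)^i)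
    (fun δ hδ => by simp only [Finset.mem_filter] at hδ; rw [nu, hδ.2]),
    Finset.sum_const, card_lev, binomPMF, nsmul_eq_mul]; ring

lemma sum_nu_one (ψ : ℝ) (L : ℕ) : ∑ δ : Fin L → Bool, nu ψ L δ = 1 := by
  classical
  have h := Finset.sum_fiberwise_of_maps_to (s := (Finset.univ : Finset (Fin L → Bool)))
    (g := fun δ : Fin L → Bool => retained δ)
    (t := Finset.range (L+1)) (fun δ _ => Finset.mem_range.2 (Nat.lt_succ_of_le (retained_le δ)))
    (nu ψ L)
  rw [← h]
  have h2 : ∑ i ∈ Finset.range (L+1),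
      ∑ δ ∈ Finset.univ.filter fun δ : Fin L → Bool => retained δ = i, nu ψ L δ
      = ∑ i ∈ Finset.range (L+1), binomPMF L ψ i :=
    Finset.sum_congr rfl fun i _ => sum_nu_level ψ L i
  rw [h2]
  have hb := add_pow (1 - ψ) ψ L
  simp only [sub_add_cancel, one_pow] at hb
  rw [hb]
  apply Finset.sum_congr rfl; intro i _; rw [binomPMF]; ring

lemma sum_nu_lt (ψ : ℝ) (L H : ℕ) :
    ∑ δ ∈ Finset.univ.filter fun δ : Fin L → Bool => retained δ < H, nu ψ L δ
      = ∑ i ∈ Finset.range H, binomPMF L ψ i := by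
  classical
  have h := Finset.sum_fiberwise_of_maps_to
    (s := Finset.univ.filter fun δ : Fin L → Bool => retained δ < H)
    (g := fun δ : Fin L → Bool => retained δ) (t := Finset.range H)
    (fun δ hδ => by simp only [Finset.mem_filter] at hδ; exact Finset.mem_range.2 hδ.2)
    (nu ψ L)
  rw [← h]
  apply Finset.sum_congr rfl
  intro i hi
  rw [Finset.filter_filter, ← sum_nu_level ψ L i]
  apply Finset.sum_congr _ (fun _ _ => rfl)
  apply Finset.filter_congr
  intro δ _
  simp only [Finset.mem_range] at hi
  constructor
  · rintro ⟨_, h2⟩; exact h2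
  · rintro h2; exact ⟨h2 ▸ hi, h2⟩

lemma sum_nu_gt (ψ : ℝ) (L H : ℕ) :
    ∑ δ ∈ Finset.univ.filter fun δ : Fin L → Bool => H < retained δ, nu ψ L δ
      = ∑ i ∈ Finset.Icc (H+1) L, binomPMF L ψ i := by
  classical
  have h := Finset.sum_fiberwise_of_maps_to
    (s := Finset.univ.filter fun δ : Fin L → Bool => H < retained δ)
    (g := fun δ : Fin L → Bool => retained δ) (t := Finset.Icc (H+1) L)
    (fun δ hδ => by
      simp only [Finset.mem_filter] at hδ
      exact Finset.mem_Icc.2 ⟨hδ.2, retained_le δ⟩)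
    (nu ψ L)
  rw [← h]
  apply Finset.sum_congr rfl
  intro i hi
  rw [Finset.filter_filter, ← sum_nu_level ψ L i]
  apply Finset.sum_congr _ (fun _ _ => rfl)
  apply Finset.filter_congr
  intro δ _
  simp only [Finset.mem_Icc] at hi
  constructor
  · rintro ⟨_, h2⟩; exact h2
  · rintro h2; exact ⟨h2 ▸ hi.1, h2⟩

lemma sum_nu_subset (ψ : ℝ) (L H : ℕ) {U : Finset (Fin L → Bool)}
    (hU : U ⊆ Finset.univ.filter fun δ : Fin L → Bool => retained δ = H) :
    ∑ δ ∈ U, nu ψ L δ = U.card * (ψ ^ (L - H) * (1 - ψ) ^ H) := by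
  classical
  rw [Finset.sum_congr rfl (g := fun _ => ψ ^ (L - H) * (1-ψ)^H) (fun δ hδ => by
    have := hU hδ
    simp only [Finset.mem_filter] at this
    rw [nu, this.2]), Finset.sum_const, nsmul_eq_mul]

lemma ratio_mono {ψ ψ' : ℝ} (h0 : 0 ≤ ψ) (h1 : ψ ≤ 1) (h0' : 0 ≤ ψ') (h1' : ψ' ≤ 1)
    (hle : ψ ≤ ψ') {L i j : ℕ} (hij : i ≤ j) (hjL : j ≤ L) :
    (ψ ^ (L - i) * (1 - ψ) ^ i) * (ψ' ^ (L - j) * (1 - ψ') ^ j)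
      ≤ (ψ ^ (L - j) * (1 - ψ) ^ j) * (ψ' ^ (L - i) * (1 - ψ') ^ i) := by
  obtain ⟨d, rfl⟩ := Nat.exists_eq_add_of_le hij
  obtain ⟨e, rfl⟩ := Nat.exists_eq_add_of_le hjL
  have e1 : i + d + e - i = d + e := by omega
  have e2 : i + d + e - (i + d) = e := by omega
  rw [e1, e2]
  have key : (ψ * (1 - ψ')) ^ d ≤ (ψ' * (1 - ψ)) ^ d := by
    apply pow_le_pow_left₀ (by nlinarith) (by nlinarith)
  calc (ψ ^ (d + e) * (1 - ψ) ^ i) * (ψ' ^ e * (1 - ψ') ^ (i + d))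
      = (ψ ^ e * (1 - ψ) ^ i * (ψ' ^ e * (1 - ψ') ^ i)) * (ψ * (1 - ψ')) ^ d := by
        rw [pow_add, pow_add, mul_pow]; ring
    _ ≤ (ψ ^ e * (1 - ψ) ^ i * (ψ' ^ e * (1 - ψ') ^ i)) * (ψ' * (1 - ψ)) ^ d := by
        apply mul_le_mul_of_nonneg_left key
        have : (0:ℝ) ≤ 1 - ψ := by linarith
        have : (0:ℝ) ≤ 1 - ψ' := by linarith
        positivity
    _ = (ψ ^ e * (1 - ψ) ^ (i + d)) * (ψ' ^ (d + e) * (1 - ψ') ^ i) := by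
        rw [pow_add, pow_add, mul_pow]; ring

lemma np_core {α : Type*} [Fintype α] [DecidableEq α] (S T : Finset α) (ν₁ ν₂ : α → ℝ)
    (t : ℝ) (hT : ∀ a ∈ T, ν₂ a ≤ t * ν₁ a) (hT' : ∀ a ∉ T, t * ν₁ a ≤ ν₂ a) :
    ∑ a ∈ T, ν₂ a + t * (∑ a ∈ S, ν₁ a - ∑ a ∈ T, ν₁ a) ≤ ∑ a ∈ S, ν₂ a := by
  classical
  have key : ∀ g : α → ℝ, ∑ a ∈ S, g a - ∑ a ∈ T, g a
      = ∑ a ∈ S \ T, g a - ∑ a ∈ T \ S, g a := fun g => by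
    rw [← Finset.sum_sdiff_sub_sum_sdiff]
  have h1 : 0 ≤ ∑ a ∈ S \ T, (ν₂ a - t * ν₁ a) :=
    Finset.sum_nonneg fun a ha => by
      have := hT' a (Finset.mem_sdiff.1 ha).2; linarith
  have h2 : ∑ a ∈ T \ S, (ν₂ a - t * ν₁ a) ≤ 0 :=
    Finset.sum_nonpos fun a ha => by
      have := hT a (Finset.mem_sdiff.1 ha).1; linarith
  have e : ∑ a ∈ S, ν₂ a - ∑ a ∈ T, ν₂ a - t * (∑ a ∈ S, ν₁ a - ∑ a ∈ T, ν₁ a)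
      = ∑ a ∈ S \ T, (ν₂ a - t * ν₁ a) - ∑ a ∈ T \ S, (ν₂ a - t * ν₁ a) := by
    rw [key ν₂, key ν₁, Finset.sum_sub_distrib, Finset.sum_sub_distrib,
      ← Finset.mul_sum, ← Finset.mul_sum]
    ring
  linarith

lemma retained_cons {n : ℕ} (b : Bool) (ε : Fin n → Bool) :
    retained (Fin.cons b ε) = (if b then 1 else 0) + retained ε := by
  classical
  have h : ∀ m (ε' : Fin m → Bool), retained ε' = ∑ i, if ε' i then 1 else 0 := by
    intro m ε'
    rw [retained, Finset.card_filter]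
  rw [h, h, Fin.sum_univ_succ]
  cases b <;> simp

lemma applyDel_cons {Ω : Type*} (a : Ω) (x : List Ω) (b : Bool) (ε : Fin x.length → Bool) :
    applyDel (a :: x) (Fin.cons b ε) = (if b then [a] else []) ++ applyDel x ε := by
  rw [applyDel, applyDel]
  have hfr : List.finRange (a :: x).length
      = (0 : Fin (x.length + 1)) :: (List.finRange x.length).map Fin.succ :=
    List.finRange_succ
  rw [hfr, List.filterMap_cons, List.filterMap_map]
  cases b <;>
    simp only [Fin.cons_zero, Bool.false_eq_true, if_false, if_pos, List.nil_append,
      List.singleton_append, List.filterMap_cons] <;>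
  · first
    | exact List.filterMap_congr (fun i _ => by
        simp [Function.comp, Fin.cons_succ, Fin.val_succ, List.getElem_cons_succ])
    | (refine congrArg (List.cons _) ?_
       exact List.filterMap_congr (fun i _ => by
        simp [Function.comp, Fin.cons_succ, Fin.val_succ, List.getElem_cons_succ]))

lemma qdel_cons {Ω : Type*} (ψ : ℝ) (a : Ω) (x : List Ω) (b : Bool) (ε : Fin x.length → Bool) :
    qdel ψ (a :: x) (Fin.cons b ε) = (if b then (1 - ψ) else ψ) * qdel ψ x ε := by
  rw [qdel, qdel, retained_cons, show (a :: x).length = x.length + 1 from rfl]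
  have hr := retained_le ε
  cases b
  · simp only [if_neg, Bool.false_eq_true, if_false]
    rw [show x.length + 1 - (0 + retained ε) = (x.length - retained ε) + 1 by omega]
    rw [pow_succ]; ring
  · simp only [if_pos]
    rw [show x.length + 1 - (1 + retained ε) = x.length - retained ε by omega]
    rw [show (1 + retained ε) = retained ε + 1 by omega, pow_succ]; ring

lemma smoothedProb_cons {Ω Y : Type*} [DecidableEq Y] (f : List Ω → Y) (y : Y) (ψ : ℝ)
    (a : Ω) (x : List Ω) :
    smoothedProb f y ψ (a :: x)
      = ψ * smoothedProb f y ψ x + (1 - ψ) * smoothedProb (fun l => f (a :: l)) y ψ x := by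
  classical
  rw [show smoothedProb f y ψ (a :: x)
      = ∑ ε : Fin (x.length + 1) → Bool, score f y ψ (a :: x) ε from rfl]
  rw [← Fintype.sum_equiv (Fin.consEquiv fun _ : Fin (x.length + 1) => Bool)
    (f := fun p : Bool × (Fin x.length → Bool) => score f y ψ (a :: x) (Fin.cons p.1 p.2))
    (g := fun ε : Fin (x.length+1) → Bool => score f y ψ (a :: x) ε)
    (fun p => rfl)]
  rw [Fintype.sum_prod_type, Fintype.sum_bool]
  have htrue : ∀ ε : Fin x.length → Bool, score f y ψ (a :: x) (Fin.cons true ε)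
      = (1 - ψ) * score (fun l => f (a :: l)) y ψ x ε := by
    intro ε
    rw [score, score, qdel_cons, applyDel_cons]
    simp only [if_pos, List.singleton_append]
    ring
  have hfalse : ∀ ε : Fin x.length → Bool, score f y ψ (a :: x) (Fin.cons false ε)
      = ψ * score f y ψ x ε := by
    intro ε
    rw [score, score, qdel_cons, applyDel_cons]
    simp only [Bool.false_eq_true, if_false, List.nil_append]
    ring
  rw [Finset.sum_congr rfl fun ε _ => htrue ε, Finset.sum_congr rfl fun ε _ => hfalse ε,
    ← Finset.mul_sum, ← Finset.mul_sum]
  rw [smoothedProb, smoothedProb]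
  ring


lemma qdel_eq_nu {Ω : Type*} (ψ : ℝ) (x : List Ω) (ε : Fin x.length → Bool) :
    qdel ψ x ε = nu ψ x.length ε := rfl

lemma smoothedProb_nonneg {Ω Y : Type*} [DecidableEq Y] (f : List Ω → Y) (y : Y) {ψ : ℝ}
    (h0 : 0 ≤ ψ) (h1 : ψ ≤ 1) (x : List Ω) : 0 ≤ smoothedProb f y ψ x := by
  apply Finset.sum_nonneg
  intro ε _
  rw [score]
  have h2 : (0:ℝ) ≤ 1 - ψ := by linarith
  have : 0 ≤ qdel ψ x ε := mul_nonneg (pow_nonneg h0 _) (pow_nonneg h2 _)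
  positivity

lemma smoothedProb_le_one {Ω Y : Type*} [DecidableEq Y] (f : List Ω → Y) (y : Y) {ψ : ℝ}
    (h0 : 0 ≤ ψ) (h1 : ψ ≤ 1) (x : List Ω) : smoothedProb f y ψ x ≤ 1 := by
  have h2 : (0:ℝ) ≤ 1 - ψ := by linarith
  calc smoothedProb f y ψ x ≤ ∑ ε : Fin x.length → Bool, qdel ψ x ε := by
        apply Finset.sum_le_sum
        intro ε _
        rw [score]
        have hq : 0 ≤ qdel ψ x ε := mul_nonneg (pow_nonneg h0 _) (pow_nonneg h2 _)
        split <;> simp [hq]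
    _ = 1 := by
        rw [Finset.sum_congr rfl fun ε _ => qdel_eq_nu ψ x ε]
        exact sum_nu_one ψ x.length

lemma factB {Ω Y : Type*} [DecidableEq Y] {ψ : ℝ} (h0 : 0 ≤ ψ) (h1 : ψ ≤ 1)
    {z x : List Ω} (hzx : z.Sublist x) (f : List Ω → Y) (y : Y) :
    ψ ^ (x.length - z.length) * smoothedProb f y ψ z ≤ smoothedProb f y ψ x := by
  induction hzx generalizing f with
  | slnil => simp
  | cons a hzx ih =>
    rename_i z' t
    have hlen : z'.length ≤ t.length := hzx.length_le
    rw [smoothedProb_cons]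
    have hcons : 0 ≤ smoothedProb (fun l => f (a :: l)) y ψ t :=
      smoothedProb_nonneg _ y h0 h1 t
    have h2 : (0:ℝ) ≤ 1 - ψ := by linarith
    have ihf := ih f
    have hP : 0 ≤ smoothedProb f y ψ z' := smoothedProb_nonneg _ y h0 h1 z'
    have hexp : (a :: t).length - z'.length = (t.length - z'.length) + 1 := by
      simp only [List.length_cons]; omega
    rw [hexp, pow_succ]
    nlinarith
  | cons_cons a hzx ih =>
    rename_i z' t
    rw [smoothedProb_cons, smoothedProb_cons]
    have h2 : (0:ℝ) ≤ 1 - ψ := by linarith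
    have ih1 := ih f
    have ih2 := ih (fun l => f (a :: l))
    have hexp : (a :: t).length - (a :: z').length = t.length - z'.length := by
      simp only [List.length_cons]; omega
    rw [hexp]
    nlinarith

lemma factA {Ω Y : Type*} [DecidableEq Y] {ψ : ℝ} (h0 : 0 ≤ ψ) (h1 : ψ ≤ 1)
    {z x : List Ω} (hzx : z.Sublist x) (f : List Ω → Y) (y : Y) :
    smoothedProb f y ψ x
      ≤ ψ ^ (x.length - z.length) * smoothedProb f y ψ z + (1 - ψ ^ (x.length - z.length)) := by
  induction hzx generalizing f with
  | slnil => simp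
  | cons a hzx ih =>
    rename_i z' t
    have hlen : z'.length ≤ t.length := hzx.length_le
    rw [smoothedProb_cons]
    have h2 : (0:ℝ) ≤ 1 - ψ := by linarith
    have ihf := ih f
    have hle1 : smoothedProb (fun l => f (a :: l)) y ψ t ≤ 1 :=
      smoothedProb_le_one _ y h0 h1 t
    have hexp : (a :: t).length - z'.length = (t.length - z'.length) + 1 := by
      simp only [List.length_cons]; omega
    rw [hexp, pow_succ]
    nlinarith
  | cons_cons a hzx ih =>
    rename_i z' t
    rw [smoothedProb_cons, smoothedProb_cons]
    have h2 : (0:ℝ) ≤ 1 - ψ := by linarith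
    have ih1 := ih f
    have ih2 := ih (fun l => f (a :: l))
    have hexp : (a :: t).length - (a :: z').length = t.length - z'.length := by
      simp only [List.length_cons]; omega
    rw [hexp]
    nlinarith

lemma np_combine {T₁ T₂ S₁ S₂ t c W : ℝ} (ht : 0 ≤ t) (hc0 : 0 < c) (hc1 : c ≤ 1)
    (hnp : T₂ + t * (S₁ - T₁) ≤ S₂) (hW : W ≤ c * S₁) (hTW : T₁ ≤ W) (hTt : T₂ ≤ t * T₁)
    (hT0 : 0 ≤ T₁) : T₂ ≤ c * S₂ := by
  nlinarith [mul_le_mul_of_nonneg_left hnp hc0.le,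
    mul_nonneg (mul_nonneg (sub_nonneg.2 hc1) ht) hT0]

lemma np_combine' {T₁ T₂ S₁ S₂ t c μ : ℝ} (ht : 0 ≤ t) (hc0 : 0 < c) (hc1 : c ≤ 1)
    (hnp : S₂ ≤ T₂ + t * (S₁ - T₁)) (hμ : c * S₁ ≤ μ) (hTμ : μ ≤ T₁) (hTt : t * T₁ ≤ T₂)
    (hT0 : 0 ≤ T₁) : c * S₂ ≤ T₂ := by
  nlinarith [mul_le_mul_of_nonneg_left hnp hc0.le,
    mul_nonneg (mul_nonneg (sub_nonneg.2 hc1) ht) hT0]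

lemma np_core' {α : Type*} [Fintype α] [DecidableEq α] (S T : Finset α) (ν₁ ν₂ : α → ℝ)
    (t : ℝ) (hT : ∀ a ∈ T, t * ν₁ a ≤ ν₂ a) (hT' : ∀ a ∉ T, ν₂ a ≤ t * ν₁ a) :
    ∑ a ∈ S, ν₂ a ≤ ∑ a ∈ T, ν₂ a + t * (∑ a ∈ S, ν₁ a - ∑ a ∈ T, ν₁ a) := by
  classical
  have key : ∀ g : α → ℝ, ∑ a ∈ S, g a - ∑ a ∈ T, g a
      = ∑ a ∈ S \ T, g a - ∑ a ∈ T \ S, g a := fun g => by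
    rw [← Finset.sum_sdiff_sub_sum_sdiff]
  have h1 : ∑ a ∈ S \ T, (ν₂ a - t * ν₁ a) ≤ 0 :=
    Finset.sum_nonpos fun a ha => by
      have := hT' a (Finset.mem_sdiff.1 ha).2; linarith
  have h2 : 0 ≤ ∑ a ∈ T \ S, (ν₂ a - t * ν₁ a) :=
    Finset.sum_nonneg fun a ha => by
      have := hT a (Finset.mem_sdiff.1 ha).1; linarith
  have e : ∑ a ∈ S, ν₂ a - ∑ a ∈ T, ν₂ a - t * (∑ a ∈ S, ν₁ a - ∑ a ∈ T, ν₁ a)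
      = ∑ a ∈ S \ T, (ν₂ a - t * ν₁ a) - ∑ a ∈ T \ S, (ν₂ a - t * ν₁ a) := by
    rw [key ν₂, key ν₁, Finset.sum_sub_distrib, Finset.sum_sub_distrib,
      ← Finset.mul_sum, ← Finset.mul_sum]
    ring
  linarith

lemma binom_nonneg {ψ : ℝ} (h0 : 0 ≤ ψ) (h1 : ψ ≤ 1) (L i : ℕ) : 0 ≤ binomPMF L ψ i := by
  have h2 : (0:ℝ) ≤ 1 - ψ := by linarith
  rw [binomPMF]; positivity

lemma binom_pos {ψ : ℝ} (h0 : 0 < ψ) (h1 : ψ < 1) {L i : ℕ} (hiL : i ≤ L) :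
    0 < binomPMF L ψ i := by
  have h2 : (0:ℝ) < 1 - ψ := by linarith
  have hc : 0 < (L.choose i : ℝ) := by exact_mod_cast Nat.choose_pos hiL
  rw [binomPMF]; positivity

lemma sum_binom_one (ψ : ℝ) (L : ℕ) : ∑ i ∈ Finset.range (L+1), binomPMF L ψ i = 1 := by
  have hb := add_pow (1 - ψ) ψ L
  simp only [sub_add_cancel, one_pow] at hb
  rw [show (1:ℝ) = ∑ m ∈ Finset.range (L+1), (1-ψ)^m * ψ^(L-m) * (L.choose m : ℝ) from hb]
  apply Finset.sum_congr rfl; intro i _; rw [binomPMF]; ring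

lemma gfloor_le (a : ℝ) {C : ℕ} (hC : 0 < C) : gfloor a ((C:ℝ)⁻¹) ≤ a := by
  have hC' : (0:ℝ) < C := by exact_mod_cast hC
  rw [gfloor, div_inv_eq_mul]
  have := Int.floor_le (a * C)
  calc ((C:ℝ))⁻¹ * (⌊a * C⌋ : ℤ) ≤ (C:ℝ)⁻¹ * (a * C) := by
        apply mul_le_mul_of_nonneg_left this (by positivity)
    _ = a := by field_simp

lemma le_gceil (a : ℝ) {C : ℕ} (hC : 0 < C) : a ≤ gceil a ((C:ℝ)⁻¹) := by
  have hC' : (0:ℝ) < C := by exact_mod_cast hC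
  rw [gceil, div_inv_eq_mul]
  have := Int.le_ceil (a * C)
  calc a = (C:ℝ)⁻¹ * (a * C) := by field_simp
    _ ≤ ((C:ℝ))⁻¹ * (⌈a * C⌉ : ℤ) := by
        apply mul_le_mul_of_nonneg_left this (by positivity)

lemma lb_le {ψ₁ ψ₂ : ℝ} (hψ₁ : ψ₁ ∈ Set.Ioo (0:ℝ) 1) (hψ₂ : ψ₂ ∈ Set.Ioo (0:ℝ) 1)
    (n nt L : ℕ) (μ : ℝ) (hμ1 : μ ≤ 1)
    (S : Finset (Fin L → Bool))
    (hW : μ - 1 + ψ₁ ^ (n - L) ≤ ψ₁ ^ (n - L) * ∑ δ ∈ S, nu ψ₁ L δ) :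
    lb μ n nt L ψ₁ ψ₂ ≤ ψ₂ ^ (nt - L) * ∑ δ ∈ S, nu ψ₂ L δ := by
  classical
  obtain ⟨hψ₁0, hψ₁1⟩ := hψ₁
  obtain ⟨hψ₂0, hψ₂1⟩ := hψ₂
  have hc0 : (0:ℝ) < ψ₁ ^ (n - L) := pow_pos hψ₁0 _
  have hc1 : ψ₁ ^ (n - L) ≤ 1 := pow_le_one₀ hψ₁0.le hψ₁1.le
  have hd0 : (0:ℝ) ≤ ψ₂ ^ (nt - L) := pow_nonneg hψ₂0.le _
  set c : ℝ := ψ₁ ^ (n - L) with hc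
  set d : ℝ := ψ₂ ^ (nt - L) with hd
  set W : ℝ := μ - 1 + c with hWdef
  have hW1 : W ≤ 1 := by simp only [hWdef]; linarith
  have hWc : W ≤ 1 * c := by simp only [hWdef, one_mul]; linarith
  have hSν₂0 : 0 ≤ ∑ δ ∈ S, nu ψ₂ L δ :=
    Finset.sum_nonneg fun δ _ => nu_nonneg hψ₂0.le hψ₂1.le L δ
  rw [lb]
  dsimp only
  split_ifs with hcase
  · rw [← hc, ← hWdef, ← hd]
    set H : ℕ := sInf {h | h ≤ L ∧ W ≤ ∑ i ∈ Finset.range (h + 1), binomPMF L ψ₁ i} with hH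
    have hne : L ∈ {h | h ≤ L ∧ W ≤ ∑ i ∈ Finset.range (h + 1), binomPMF L ψ₁ i} := by
      refine ⟨le_refl L, ?_⟩
      rw [sum_binom_one]; exact hW1
    have Hmem := Nat.sInf_mem (Set.nonempty_of_mem hne)
    rw [← hH] at Hmem
    obtain ⟨HL, HW⟩ := Hmem
    have hCpos : 0 < L.choose H := Nat.choose_pos HL
    have hCpos' : (0:ℝ) < (L.choose H : ℝ) := by exact_mod_cast hCpos
    have hB₁pos : 0 < binomPMF L ψ₁ H := binom_pos hψ₁0 hψ₁1 HL
    by_cases hW0 : W ≤ 0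
    · -- easy case : lb ≤ 0
      have hH0 : H = 0 := by
        rw [hH]
        rw [Nat.sInf_eq_zero]
        left
        refine ⟨Nat.zero_le L, ?_⟩
        calc W ≤ 0 := hW0
          _ ≤ ∑ i ∈ Finset.range (0 + 1), binomPMF L ψ₁ i :=
            Finset.sum_nonneg fun i _ => binom_nonneg hψ₁0.le hψ₁1.le L i
      rw [hH0]
      simp only [Finset.range_zero, Finset.sum_empty, zero_add, Finset.sum_range_zero, sub_zero]
      have hgf : gfloor (W / binomPMF L ψ₁ 0) ((L.choose 0 : ℝ))⁻¹ ≤ 0 := by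
        have h1 : gfloor (W / binomPMF L ψ₁ 0) ((L.choose 0 : ℝ))⁻¹ ≤ W / binomPMF L ψ₁ 0 :=
          gfloor_le _ (Nat.choose_pos (Nat.zero_le L))
        have hB0 : 0 < binomPMF L ψ₁ 0 := binom_pos hψ₁0 hψ₁1 (Nat.zero_le L)
        have : W / binomPMF L ψ₁ 0 ≤ 0 := div_nonpos_of_nonpos_of_nonneg hW0 hB0.le
        linarith
      have hB₂0 : 0 ≤ binomPMF L ψ₂ 0 := binom_nonneg hψ₂0.le hψ₂1.le L 0
      have : d / c * (binomPMF L ψ₂ 0 * gfloor (W / binomPMF L ψ₁ 0) ((L.choose 0 : ℝ))⁻¹) ≤ 0 := by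
        apply mul_nonpos_of_nonneg_of_nonpos (by positivity)
        exact mul_nonpos_of_nonneg_of_nonpos hB₂0 hgf
      calc d / c * (binomPMF L ψ₂ 0 * gfloor (W / binomPMF L ψ₁ 0) ((L.choose 0 : ℝ))⁻¹) ≤ 0 :=
            this
        _ ≤ d * ∑ δ ∈ S, nu ψ₂ L δ := mul_nonneg hd0 hSν₂0
    · push_neg at hW0
      -- main case
      set s₁ : ℝ := ∑ i ∈ Finset.range H, binomPMF L ψ₁ i with hs₁def
      set s₂ : ℝ := ∑ i ∈ Finset.range H, binomPMF L ψ₂ i with hs₂def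
      have hs₁0 : 0 ≤ s₁ := Finset.sum_nonneg fun i _ => binom_nonneg hψ₁0.le hψ₁1.le L i
      have hs₁W : s₁ < W := by
        rcases Nat.eq_zero_or_pos H with h0 | hpos
        · rw [hs₁def, h0]; simpa using hW0
        · have hnm : H - 1 ∉ {h | h ≤ L ∧ W ≤ ∑ i ∈ Finset.range (h + 1), binomPMF L ψ₁ i} :=
            Nat.notMem_of_lt_sInf (by omega)
          simp only [Set.mem_setOf_eq, not_and, not_le] at hnm
          have := hnm (by omega)
          rw [show H - 1 + 1 = H by omega] at this
          exact this
      have hWs₁B : W ≤ s₁ + binomPMF L ψ₁ H := by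
        rw [hs₁def, ← Finset.sum_range_succ]; exact HW
      set b₁ : ℝ := ψ₁ ^ (L - H) * (1 - ψ₁) ^ H with hb₁def
      set b₂ : ℝ := ψ₂ ^ (L - H) * (1 - ψ₂) ^ H with hb₂def
      have hb₁pos : 0 < b₁ := by
        have : (0:ℝ) < 1 - ψ₁ := by linarith
        rw [hb₁def]; positivity
      have hb₂0 : 0 ≤ b₂ := by
        have : (0:ℝ) ≤ 1 - ψ₂ := by linarith
        rw [hb₂def]; positivity
      have hB₁eq : binomPMF L ψ₁ H = (L.choose H : ℝ) * b₁ := by rw [binomPMF, hb₁def]; ring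
      have hB₂eq : binomPMF L ψ₂ H = (L.choose H : ℝ) * b₂ := by rw [binomPMF, hb₂def]; ring
      set a : ℝ := (W - s₁) / binomPMF L ψ₁ H with hadef
      have ha0 : 0 ≤ a := div_nonneg (by linarith) hB₁pos.le
      have ha1 : a ≤ 1 := by
        rw [hadef, div_le_one hB₁pos]; linarith
      set K : ℕ := (⌊a * (L.choose H : ℝ)⌋).toNat with hKdef
      have hfl0 : (0:ℤ) ≤ ⌊a * (L.choose H : ℝ)⌋ := Int.floor_nonneg.2 (by positivity)
      have hKfl : (K:ℝ) = (⌊a * (L.choose H : ℝ)⌋ : ℝ) := by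
        rw [hKdef]; exact_mod_cast Int.toNat_of_nonneg hfl0
      have hKle : (K:ℝ) ≤ a * (L.choose H : ℝ) := by
        rw [hKfl]; exact Int.floor_le _
      have hKC : K ≤ L.choose H := by
        have haC : a * (L.choose H : ℝ) ≤ (L.choose H : ℝ) := by
          calc a * (L.choose H : ℝ) ≤ 1 * (L.choose H : ℝ) :=
                mul_le_mul_of_nonneg_right ha1 hCpos'.le
            _ = (L.choose H : ℝ) := one_mul _
        have : (K:ℝ) ≤ (L.choose H : ℝ) := le_trans hKle haC
        exact_mod_cast this
      obtain ⟨U, hU, hUcard⟩ := Finset.exists_subset_card_eq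
        (show K ≤ (Finset.univ.filter fun δ : Fin L → Bool => retained δ = H).card by
          rw [card_lev]; exact hKC)
      set T : Finset (Fin L → Bool) :=
        (Finset.univ.filter fun δ : Fin L → Bool => retained δ < H) ∪ U with hT
      have hdisj : Disjoint (Finset.univ.filter fun δ : Fin L → Bool => retained δ < H) U := by
        rw [Finset.disjoint_left]
        intro δ h1 h2
        have := hU h2
        simp only [Finset.mem_filter] at this h1
        omega
      have hTsum : ∀ ψ : ℝ, ∑ δ ∈ T, nu ψ L δ
          = (∑ i ∈ Finset.range H, binomPMF L ψ i) + K * (ψ ^ (L - H) * (1 - ψ) ^ H) := by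
        intro ψ
        rw [hT, Finset.sum_union hdisj, sum_nu_lt, sum_nu_subset ψ L H hU, hUcard]
      have hT₁ : ∑ δ ∈ T, nu ψ₁ L δ = s₁ + K * b₁ := hTsum ψ₁
      have hT₂ : ∑ δ ∈ T, nu ψ₂ L δ = s₂ + K * b₂ := hTsum ψ₂
      have hT₁W : ∑ δ ∈ T, nu ψ₁ L δ ≤ W := by
        rw [hT₁]
        have : (K:ℝ) * b₁ ≤ a * (L.choose H : ℝ) * b₁ :=
          mul_le_mul_of_nonneg_right hKle hb₁pos.le
        have ha' : a * (L.choose H : ℝ) * b₁ = W - s₁ := by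
          rw [hadef, hB₁eq]; field_simp
        linarith
      have hT₁0 : 0 ≤ ∑ δ ∈ T, nu ψ₁ L δ :=
        Finset.sum_nonneg fun δ _ => nu_nonneg hψ₁0.le hψ₁1.le L δ
      -- ratio conditions
      set cth : ℝ := b₂ / b₁ with hcth
      have hcth0 : 0 ≤ cth := div_nonneg hb₂0 hb₁pos.le
      have hrT : ∀ δ ∈ T, nu ψ₂ L δ ≤ cth * nu ψ₁ L δ := by
        intro δ hδ
        have hiH : retained δ ≤ H := by
          rw [hT, Finset.mem_union] at hδ
          rcases hδ with h | h
          · simp only [Finset.mem_filter] at h; omega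
          · have := hU h; simp only [Finset.mem_filter] at this; omega
        have := ratio_mono hψ₂0.le hψ₂1.le hψ₁0.le hψ₁1.le hcase hiH HL
        rw [hcth, div_mul_eq_mul_div, le_div_iff₀ hb₁pos]
        calc nu ψ₂ L δ * b₁
            = (ψ₂ ^ (L - retained δ) * (1 - ψ₂) ^ retained δ)
              * (ψ₁ ^ (L - H) * (1 - ψ₁) ^ H) := by rw [nu, hb₁def]
          _ ≤ (ψ₂ ^ (L - H) * (1 - ψ₂) ^ H)
              * (ψ₁ ^ (L - retained δ) * (1 - ψ₁) ^ retained δ) := this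
          _ = b₂ * nu ψ₁ L δ := by rw [nu, hb₂def]
      have hrT' : ∀ δ ∉ T, cth * nu ψ₁ L δ ≤ nu ψ₂ L δ := by
        intro δ hδ
        have hiH : H ≤ retained δ := by
          by_contra hcon
          push_neg at hcon
          apply hδ
          rw [hT, Finset.mem_union]
          left
          simp only [Finset.mem_filter]
          exact ⟨Finset.mem_univ δ, hcon⟩
        have := ratio_mono hψ₂0.le hψ₂1.le hψ₁0.le hψ₁1.le hcase hiH (retained_le δ)
        rw [hcth, div_mul_eq_mul_div, div_le_iff₀ hb₁pos]
        calc b₂ * nu ψ₁ L δ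
            = (ψ₂ ^ (L - H) * (1 - ψ₂) ^ H)
              * (ψ₁ ^ (L - retained δ) * (1 - ψ₁) ^ retained δ) := by rw [nu, hb₂def]
          _ ≤ (ψ₂ ^ (L - retained δ) * (1 - ψ₂) ^ retained δ)
              * (ψ₁ ^ (L - H) * (1 - ψ₁) ^ H) := this
          _ = nu ψ₂ L δ * b₁ := by rw [nu, hb₁def]
      have np := np_core S T (nu ψ₁ L) (nu ψ₂ L) cth hrT hrT'
      have hT₂c : ∑ δ ∈ T, nu ψ₂ L δ ≤ cth * ∑ δ ∈ T, nu ψ₁ L δ := by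
        rw [Finset.mul_sum]; exact Finset.sum_le_sum hrT
      -- key inequality
      have key : ∑ δ ∈ T, nu ψ₂ L δ ≤ c * ∑ δ ∈ S, nu ψ₂ L δ :=
        np_combine hcth0 hc0 hc1 np hW hT₁W hT₂c hT₁0
      -- rewrite goal
      have hgf : gfloor a ((L.choose H : ℝ))⁻¹ = (K:ℝ) / (L.choose H : ℝ) := by
        rw [gfloor, div_inv_eq_mul, hKfl]; field_simp
      have hgoal : s₂ + binomPMF L ψ₂ H * gfloor a ((L.choose H : ℝ))⁻¹
          = ∑ δ ∈ T, nu ψ₂ L δ := by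
        rw [hgf, hB₂eq, hT₂]; field_simp
      rw [hgoal]
      rw [div_mul_eq_mul_div, div_le_iff₀ hc0]
      calc d * ∑ δ ∈ T, nu ψ₂ L δ ≤ d * (c * ∑ δ ∈ S, nu ψ₂ L δ) :=
            mul_le_mul_of_nonneg_left key hd0
        _ = d * (∑ δ ∈ S, nu ψ₂ L δ) * c := by ring
  · have hcase' : ψ₁ ≤ ψ₂ := (not_le.1 hcase).le
    rw [← hc, ← hWdef, ← hd]
    set H : ℕ := sSup {h | h ≤ L ∧ W ≤ ∑ i ∈ Finset.Icc h L, binomPMF L ψ₁ i} with hH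
    have hbdd : BddAbove {h | h ≤ L ∧ W ≤ ∑ i ∈ Finset.Icc h L, binomPMF L ψ₁ i} :=
      ⟨L, fun h hh => hh.1⟩
    have hIcc0 : Finset.Icc 0 L = Finset.range (L + 1) := by
      rw [← Finset.Ico_add_one_right_eq_Icc, Nat.Ico_zero_eq_range]
    have hne : 0 ∈ {h | h ≤ L ∧ W ≤ ∑ i ∈ Finset.Icc h L, binomPMF L ψ₁ i} := by
      refine ⟨Nat.zero_le L, ?_⟩
      rw [hIcc0, sum_binom_one]; exact hW1
    have Hmem := Nat.sSup_mem (Set.nonempty_of_mem hne) hbdd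
    rw [← hH] at Hmem
    obtain ⟨HL, HW⟩ := Hmem
    have hCpos : 0 < L.choose H := Nat.choose_pos HL
    have hCpos' : (0:ℝ) < (L.choose H : ℝ) := by exact_mod_cast hCpos
    have hB₁pos : 0 < binomPMF L ψ₁ H := binom_pos hψ₁0 hψ₁1 HL
    by_cases hW0 : W ≤ 0
    · have hHL : H = L := by
        have hLmem : L ∈ {h | h ≤ L ∧ W ≤ ∑ i ∈ Finset.Icc h L, binomPMF L ψ₁ i} := by
          refine ⟨le_refl L, ?_⟩
          calc W ≤ 0 := hW0
            _ ≤ ∑ i ∈ Finset.Icc L L, binomPMF L ψ₁ i :=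
              Finset.sum_nonneg fun i _ => binom_nonneg hψ₁0.le hψ₁1.le L i
        exact le_antisymm HL (le_csSup hbdd hLmem)
      rw [hHL]
      rw [Finset.Icc_eq_empty (by omega : ¬ L + 1 ≤ L)]
      simp only [Finset.sum_empty, zero_add, sub_zero]
      have hgf : gfloor (W / binomPMF L ψ₁ L) ((L.choose L : ℝ))⁻¹ ≤ 0 := by
        have h1 : gfloor (W / binomPMF L ψ₁ L) ((L.choose L : ℝ))⁻¹ ≤ W / binomPMF L ψ₁ L :=
          gfloor_le _ (Nat.choose_pos (le_refl L))
        have hB0 : 0 < binomPMF L ψ₁ L := binom_pos hψ₁0 hψ₁1 (le_refl L)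
        have : W / binomPMF L ψ₁ L ≤ 0 := div_nonpos_of_nonpos_of_nonneg hW0 hB0.le
        linarith
      have hB₂0 : 0 ≤ binomPMF L ψ₂ L := binom_nonneg hψ₂0.le hψ₂1.le L L
      have hneg : d / c * (binomPMF L ψ₂ L * gfloor (W / binomPMF L ψ₁ L) ((L.choose L : ℝ))⁻¹)
          ≤ 0 := by
        apply mul_nonpos_of_nonneg_of_nonpos (by positivity)
        exact mul_nonpos_of_nonneg_of_nonpos hB₂0 hgf
      calc d / c * (binomPMF L ψ₂ L * gfloor (W / binomPMF L ψ₁ L) ((L.choose L : ℝ))⁻¹) ≤ 0 :=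
            hneg
        _ ≤ d * ∑ δ ∈ S, nu ψ₂ L δ := mul_nonneg hd0 hSν₂0
    · push_neg at hW0
      set s₁ : ℝ := ∑ i ∈ Finset.Icc (H + 1) L, binomPMF L ψ₁ i with hs₁def
      set s₂ : ℝ := ∑ i ∈ Finset.Icc (H + 1) L, binomPMF L ψ₂ i with hs₂def
      have hs₁0 : 0 ≤ s₁ := Finset.sum_nonneg fun i _ => binom_nonneg hψ₁0.le hψ₁1.le L i
      have hs₁W : s₁ < W := by
        rcases eq_or_lt_of_le HL with h0 | hpos
        · rw [hs₁def, h0, Finset.Icc_eq_empty (by omega : ¬ L + 1 ≤ L)]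
          simpa using hW0
        · have hnm : H + 1 ∉ {h | h ≤ L ∧ W ≤ ∑ i ∈ Finset.Icc h L, binomPMF L ψ₁ i} := by
            intro hmem
            have := le_csSup hbdd hmem
            rw [← hH] at this
            omega
          simp only [Set.mem_setOf_eq, not_and, not_le] at hnm
          exact hnm (by omega)
      have hWs₁B : W ≤ s₁ + binomPMF L ψ₁ H := by
        have hsplit : ∑ i ∈ Finset.Icc H L, binomPMF L ψ₁ i
            = binomPMF L ψ₁ H + ∑ i ∈ Finset.Icc (H + 1) L, binomPMF L ψ₁ i := by
          rw [Finset.Icc_eq_cons_Ioc HL, Finset.sum_cons, Finset.Icc_add_one_left_eq_Ioc]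
        rw [hs₁def]
        calc W ≤ ∑ i ∈ Finset.Icc H L, binomPMF L ψ₁ i := HW
          _ = binomPMF L ψ₁ H + ∑ i ∈ Finset.Icc (H + 1) L, binomPMF L ψ₁ i := hsplit
          _ = ∑ i ∈ Finset.Icc (H + 1) L, binomPMF L ψ₁ i + binomPMF L ψ₁ H := by ring
      set b₁ : ℝ := ψ₁ ^ (L - H) * (1 - ψ₁) ^ H with hb₁def
      set b₂ : ℝ := ψ₂ ^ (L - H) * (1 - ψ₂) ^ H with hb₂def
      have hb₁pos : 0 < b₁ := by
        have : (0:ℝ) < 1 - ψ₁ := by linarith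
        rw [hb₁def]; positivity
      have hb₂0 : 0 ≤ b₂ := by
        have : (0:ℝ) ≤ 1 - ψ₂ := by linarith
        rw [hb₂def]; positivity
      have hB₁eq : binomPMF L ψ₁ H = (L.choose H : ℝ) * b₁ := by rw [binomPMF, hb₁def]; ring
      have hB₂eq : binomPMF L ψ₂ H = (L.choose H : ℝ) * b₂ := by rw [binomPMF, hb₂def]; ring
      set a : ℝ := (W - s₁) / binomPMF L ψ₁ H with hadef
      have ha0 : 0 ≤ a := div_nonneg (by linarith) hB₁pos.le
      have ha1 : a ≤ 1 := by
        rw [hadef, div_le_one hB₁pos]; linarith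
      set K : ℕ := (⌊a * (L.choose H : ℝ)⌋).toNat with hKdef
      have hfl0 : (0:ℤ) ≤ ⌊a * (L.choose H : ℝ)⌋ := Int.floor_nonneg.2 (by positivity)
      have hKfl : (K:ℝ) = (⌊a * (L.choose H : ℝ)⌋ : ℝ) := by
        rw [hKdef]; exact_mod_cast Int.toNat_of_nonneg hfl0
      have hKle : (K:ℝ) ≤ a * (L.choose H : ℝ) := by
        rw [hKfl]; exact Int.floor_le _
      have hKC : K ≤ L.choose H := by
        have haC : a * (L.choose H : ℝ) ≤ (L.choose H : ℝ) := by
          calc a * (L.choose H : ℝ) ≤ 1 * (L.choose H : ℝ) :=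
                mul_le_mul_of_nonneg_right ha1 hCpos'.le
            _ = (L.choose H : ℝ) := one_mul _
        have : (K:ℝ) ≤ (L.choose H : ℝ) := le_trans hKle haC
        exact_mod_cast this
      obtain ⟨U, hU, hUcard⟩ := Finset.exists_subset_card_eq
        (show K ≤ (Finset.univ.filter fun δ : Fin L → Bool => retained δ = H).card by
          rw [card_lev]; exact hKC)
      set T : Finset (Fin L → Bool) :=
        (Finset.univ.filter fun δ : Fin L → Bool => H < retained δ) ∪ U with hT
      have hdisj : Disjoint (Finset.univ.filter fun δ : Fin L → Bool => H < retained δ) U := by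
        rw [Finset.disjoint_left]
        intro δ h1 h2
        have := hU h2
        simp only [Finset.mem_filter] at this h1
        omega
      have hTsum : ∀ ψ : ℝ, ∑ δ ∈ T, nu ψ L δ
          = (∑ i ∈ Finset.Icc (H + 1) L, binomPMF L ψ i) + K * (ψ ^ (L - H) * (1 - ψ) ^ H) := by
        intro ψ
        rw [hT, Finset.sum_union hdisj, sum_nu_gt, sum_nu_subset ψ L H hU, hUcard]
      have hT₁ : ∑ δ ∈ T, nu ψ₁ L δ = s₁ + K * b₁ := hTsum ψ₁
      have hT₂ : ∑ δ ∈ T, nu ψ₂ L δ = s₂ + K * b₂ := hTsum ψ₂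
      have hT₁W : ∑ δ ∈ T, nu ψ₁ L δ ≤ W := by
        rw [hT₁]
        have hKb : (K:ℝ) * b₁ ≤ a * (L.choose H : ℝ) * b₁ :=
          mul_le_mul_of_nonneg_right hKle hb₁pos.le
        have ha' : a * (L.choose H : ℝ) * b₁ = W - s₁ := by
          rw [hadef, hB₁eq]; field_simp
        linarith
      have hT₁0 : 0 ≤ ∑ δ ∈ T, nu ψ₁ L δ :=
        Finset.sum_nonneg fun δ _ => nu_nonneg hψ₁0.le hψ₁1.le L δ
      set cth : ℝ := b₂ / b₁ with hcth
      have hcth0 : 0 ≤ cth := div_nonneg hb₂0 hb₁pos.le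
      have hrT : ∀ δ ∈ T, nu ψ₂ L δ ≤ cth * nu ψ₁ L δ := by
        intro δ hδ
        have hiH : H ≤ retained δ := by
          rw [hT, Finset.mem_union] at hδ
          rcases hδ with h | h
          · simp only [Finset.mem_filter] at h; omega
          · have := hU h; simp only [Finset.mem_filter] at this; omega
        have := ratio_mono hψ₁0.le hψ₁1.le hψ₂0.le hψ₂1.le hcase' hiH (retained_le δ)
        rw [hcth, div_mul_eq_mul_div, le_div_iff₀ hb₁pos]
        calc nu ψ₂ L δ * b₁
            = (ψ₁ ^ (L - H) * (1 - ψ₁) ^ H)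
              * (ψ₂ ^ (L - retained δ) * (1 - ψ₂) ^ retained δ) := by rw [nu, hb₁def]; try ring
          _ ≤ (ψ₁ ^ (L - retained δ) * (1 - ψ₁) ^ retained δ)
              * (ψ₂ ^ (L - H) * (1 - ψ₂) ^ H) := this
          _ = b₂ * nu ψ₁ L δ := by rw [nu, hb₂def]; try ring
      have hrT' : ∀ δ ∉ T, cth * nu ψ₁ L δ ≤ nu ψ₂ L δ := by
        intro δ hδ
        have hiH : retained δ ≤ H := by
          by_contra hcon
          push_neg at hcon
          apply hδ
          rw [hT, Finset.mem_union]
          left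
          simp only [Finset.mem_filter]
          exact ⟨Finset.mem_univ δ, hcon⟩
        have := ratio_mono hψ₁0.le hψ₁1.le hψ₂0.le hψ₂1.le hcase' hiH HL
        rw [hcth, div_mul_eq_mul_div, div_le_iff₀ hb₁pos]
        calc b₂ * nu ψ₁ L δ
            = (ψ₁ ^ (L - retained δ) * (1 - ψ₁) ^ retained δ)
              * (ψ₂ ^ (L - H) * (1 - ψ₂) ^ H) := by rw [nu, hb₂def]; try ring
          _ ≤ (ψ₁ ^ (L - H) * (1 - ψ₁) ^ H)
              * (ψ₂ ^ (L - retained δ) * (1 - ψ₂) ^ retained δ) := this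
          _ = nu ψ₂ L δ * b₁ := by rw [nu, hb₁def]; try ring
      have np := np_core S T (nu ψ₁ L) (nu ψ₂ L) cth hrT hrT'
      have hT₂c : ∑ δ ∈ T, nu ψ₂ L δ ≤ cth * ∑ δ ∈ T, nu ψ₁ L δ := by
        rw [Finset.mul_sum]; exact Finset.sum_le_sum hrT
      have key : ∑ δ ∈ T, nu ψ₂ L δ ≤ c * ∑ δ ∈ S, nu ψ₂ L δ :=
        np_combine hcth0 hc0 hc1 np hW hT₁W hT₂c hT₁0
      have hgf : gfloor a ((L.choose H : ℝ))⁻¹ = (K:ℝ) / (L.choose H : ℝ) := by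
        rw [gfloor, div_inv_eq_mul, hKfl]; field_simp
      have hgoal : s₂ + binomPMF L ψ₂ H * gfloor a ((L.choose H : ℝ))⁻¹
          = ∑ δ ∈ T, nu ψ₂ L δ := by
        rw [hgf, hB₂eq, hT₂]; field_simp
      rw [hgoal]
      rw [div_mul_eq_mul_div, div_le_iff₀ hc0]
      calc d * ∑ δ ∈ T, nu ψ₂ L δ ≤ d * (c * ∑ δ ∈ S, nu ψ₂ L δ) :=
            mul_le_mul_of_nonneg_left key hd0
        _ = d * (∑ δ ∈ S, nu ψ₂ L δ) * c := by ring

lemma ub_le {ψ₁ ψ₂ : ℝ} (hψ₁ : ψ₁ ∈ Set.Ioo (0:ℝ) 1) (hψ₂ : ψ₂ ∈ Set.Ioo (0:ℝ) 1)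
    (n nt L : ℕ) (μ : ℝ) (hμ0 : 0 ≤ μ) (hμ1 : μ ≤ 1)
    (S : Finset (Fin L → Bool))
    (hS : ψ₁ ^ (n - L) * ∑ δ ∈ S, nu ψ₁ L δ ≤ μ) :
    ψ₂ ^ (nt - L) * ∑ δ ∈ S, nu ψ₂ L δ + 1 - ψ₂ ^ (nt - L) ≤ ub μ n nt L ψ₁ ψ₂ := by
  classical
  obtain ⟨hψ₁0, hψ₁1⟩ := hψ₁
  obtain ⟨hψ₂0, hψ₂1⟩ := hψ₂
  have hc0 : (0:ℝ) < ψ₁ ^ (n - L) := pow_pos hψ₁0 _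
  have hc1 : ψ₁ ^ (n - L) ≤ 1 := pow_le_one₀ hψ₁0.le hψ₁1.le
  have hd0 : (0:ℝ) ≤ ψ₂ ^ (nt - L) := pow_nonneg hψ₂0.le _
  set c : ℝ := ψ₁ ^ (n - L) with hc
  set d : ℝ := ψ₂ ^ (nt - L) with hd
  have hSν₂0 : 0 ≤ ∑ δ ∈ S, nu ψ₂ L δ :=
    Finset.sum_nonneg fun δ _ => nu_nonneg hψ₂0.le hψ₂1.le L δ
  rw [ub]
  dsimp only
  split_ifs with hcase
  · rw [← hc, ← hd]
    set H : ℕ := sInf {h | h ≤ L ∧ μ ≤ ∑ i ∈ Finset.range (h + 1), binomPMF L ψ₁ i} with hH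
    have hne : L ∈ {h | h ≤ L ∧ μ ≤ ∑ i ∈ Finset.range (h + 1), binomPMF L ψ₁ i} := by
      refine ⟨le_refl L, ?_⟩
      rw [sum_binom_one]; exact hμ1
    have Hmem := Nat.sInf_mem (Set.nonempty_of_mem hne)
    rw [← hH] at Hmem
    obtain ⟨HL, HW⟩ := Hmem
    have hCpos : 0 < L.choose H := Nat.choose_pos HL
    have hCpos' : (0:ℝ) < (L.choose H : ℝ) := by exact_mod_cast hCpos
    have hB₁pos : 0 < binomPMF L ψ₁ H := binom_pos hψ₁0 hψ₁1 HL
    set s₁ : ℝ := ∑ i ∈ Finset.range H, binomPMF L ψ₁ i with hs₁def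
    set s₂ : ℝ := ∑ i ∈ Finset.range H, binomPMF L ψ₂ i with hs₂def
    have hs₁0 : 0 ≤ s₁ := Finset.sum_nonneg fun i _ => binom_nonneg hψ₁0.le hψ₁1.le L i
    have hs₁μ : s₁ ≤ μ := by
      rcases Nat.eq_zero_or_pos H with h0 | hpos
      · rw [hs₁def, h0]; simpa using hμ0
      · have hnm : H - 1 ∉ {h | h ≤ L ∧ μ ≤ ∑ i ∈ Finset.range (h + 1), binomPMF L ψ₁ i} :=
          Nat.notMem_of_lt_sInf (by omega)
        simp only [Set.mem_setOf_eq, not_and, not_le] at hnm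
        have := hnm (by omega)
        rw [show H - 1 + 1 = H by omega] at this
        rw [hs₁def]; linarith
    have hμs₁B : μ ≤ s₁ + binomPMF L ψ₁ H := by
      rw [hs₁def, ← Finset.sum_range_succ]; exact HW
    set b₁ : ℝ := ψ₁ ^ (L - H) * (1 - ψ₁) ^ H with hb₁def
    set b₂ : ℝ := ψ₂ ^ (L - H) * (1 - ψ₂) ^ H with hb₂def
    have hb₁pos : 0 < b₁ := by
      have : (0:ℝ) < 1 - ψ₁ := by linarith
      rw [hb₁def]; positivity
    have hb₂0 : 0 ≤ b₂ := by
      have : (0:ℝ) ≤ 1 - ψ₂ := by linarith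
      rw [hb₂def]; positivity
    have hB₁eq : binomPMF L ψ₁ H = (L.choose H : ℝ) * b₁ := by rw [binomPMF, hb₁def]; ring
    have hB₂eq : binomPMF L ψ₂ H = (L.choose H : ℝ) * b₂ := by rw [binomPMF, hb₂def]; ring
    set a : ℝ := (μ - s₁) / binomPMF L ψ₁ H with hadef
    have ha0 : 0 ≤ a := div_nonneg (by linarith) hB₁pos.le
    have ha1 : a ≤ 1 := by
      rw [hadef, div_le_one hB₁pos]; linarith
    set K : ℕ := (⌈a * (L.choose H : ℝ)⌉).toNat with hKdef
    have hcl0 : (0:ℤ) ≤ ⌈a * (L.choose H : ℝ)⌉ := Int.ceil_nonneg (by positivity)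
    have hKcl : (K:ℝ) = (⌈a * (L.choose H : ℝ)⌉ : ℝ) := by
      rw [hKdef]; exact_mod_cast Int.toNat_of_nonneg hcl0
    have hKge : a * (L.choose H : ℝ) ≤ (K:ℝ) := by
      rw [hKcl]; exact Int.le_ceil _
    have hKC : K ≤ L.choose H := by
      have haC : a * (L.choose H : ℝ) ≤ (L.choose H : ℝ) := by
        calc a * (L.choose H : ℝ) ≤ 1 * (L.choose H : ℝ) :=
              mul_le_mul_of_nonneg_right ha1 hCpos'.le
          _ = (L.choose H : ℝ) := one_mul _
      have h1 : (⌈a * (L.choose H : ℝ)⌉ : ℤ) ≤ (L.choose H : ℤ) := by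
        apply Int.ceil_le.2
        exact_mod_cast haC
      rw [hKdef]
      omega
    obtain ⟨U, hU, hUcard⟩ := Finset.exists_subset_card_eq
      (show K ≤ (Finset.univ.filter fun δ : Fin L → Bool => retained δ = H).card by
        rw [card_lev]; exact hKC)
    set T : Finset (Fin L → Bool) :=
      (Finset.univ.filter fun δ : Fin L → Bool => retained δ < H) ∪ U with hT
    have hdisj : Disjoint (Finset.univ.filter fun δ : Fin L → Bool => retained δ < H) U := by
      rw [Finset.disjoint_left]
      intro δ h1 h2
      have := hU h2
      simp only [Finset.mem_filter] at this h1
      omega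
    have hTsum : ∀ ψ : ℝ, ∑ δ ∈ T, nu ψ L δ
        = (∑ i ∈ Finset.range H, binomPMF L ψ i) + K * (ψ ^ (L - H) * (1 - ψ) ^ H) := by
      intro ψ
      rw [hT, Finset.sum_union hdisj, sum_nu_lt, sum_nu_subset ψ L H hU, hUcard]
    have hT₁ : ∑ δ ∈ T, nu ψ₁ L δ = s₁ + K * b₁ := hTsum ψ₁
    have hT₂ : ∑ δ ∈ T, nu ψ₂ L δ = s₂ + K * b₂ := hTsum ψ₂
    have hT₁μ : μ ≤ ∑ δ ∈ T, nu ψ₁ L δ := by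
      rw [hT₁]
      have hKb : a * (L.choose H : ℝ) * b₁ ≤ (K:ℝ) * b₁ :=
        mul_le_mul_of_nonneg_right hKge hb₁pos.le
      have ha' : a * (L.choose H : ℝ) * b₁ = μ - s₁ := by
        rw [hadef, hB₁eq]; field_simp
      linarith
    have hT₁0 : 0 ≤ ∑ δ ∈ T, nu ψ₁ L δ :=
      Finset.sum_nonneg fun δ _ => nu_nonneg hψ₁0.le hψ₁1.le L δ
    set cth : ℝ := b₂ / b₁ with hcth
    have hcth0 : 0 ≤ cth := div_nonneg hb₂0 hb₁pos.le
    have hrT : ∀ δ ∈ T, cth * nu ψ₁ L δ ≤ nu ψ₂ L δ := by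
      intro δ hδ
      have hiH : retained δ ≤ H := by
        rw [hT, Finset.mem_union] at hδ
        rcases hδ with h | h
        · simp only [Finset.mem_filter] at h; omega
        · have := hU h; simp only [Finset.mem_filter] at this; omega
      have := ratio_mono hψ₁0.le hψ₁1.le hψ₂0.le hψ₂1.le hcase hiH HL
      rw [hcth, div_mul_eq_mul_div, div_le_iff₀ hb₁pos]
      calc b₂ * nu ψ₁ L δ
          = (ψ₁ ^ (L - retained δ) * (1 - ψ₁) ^ retained δ)
            * (ψ₂ ^ (L - H) * (1 - ψ₂) ^ H) := by rw [nu, hb₂def]; try ring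
        _ ≤ (ψ₁ ^ (L - H) * (1 - ψ₁) ^ H)
            * (ψ₂ ^ (L - retained δ) * (1 - ψ₂) ^ retained δ) := this
        _ = nu ψ₂ L δ * b₁ := by rw [nu, hb₁def]; try ring
    have hrT' : ∀ δ ∉ T, nu ψ₂ L δ ≤ cth * nu ψ₁ L δ := by
      intro δ hδ
      have hiH : H ≤ retained δ := by
        by_contra hcon
        push_neg at hcon
        apply hδ
        rw [hT, Finset.mem_union]
        left
        simp only [Finset.mem_filter]
        exact ⟨Finset.mem_univ δ, hcon⟩
      have := ratio_mono hψ₁0.le hψ₁1.le hψ₂0.le hψ₂1.le hcase hiH (retained_le δ)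
      rw [hcth, div_mul_eq_mul_div, le_div_iff₀ hb₁pos]
      calc nu ψ₂ L δ * b₁
          = (ψ₁ ^ (L - H) * (1 - ψ₁) ^ H)
            * (ψ₂ ^ (L - retained δ) * (1 - ψ₂) ^ retained δ) := by rw [nu, hb₁def]; try ring
        _ ≤ (ψ₁ ^ (L - retained δ) * (1 - ψ₁) ^ retained δ)
            * (ψ₂ ^ (L - H) * (1 - ψ₂) ^ H) := this
        _ = b₂ * nu ψ₁ L δ := by rw [nu, hb₂def]; try ring
    have np := np_core' S T (nu ψ₁ L) (nu ψ₂ L) cth hrT hrT'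
    have hT₂c : cth * ∑ δ ∈ T, nu ψ₁ L δ ≤ ∑ δ ∈ T, nu ψ₂ L δ := by
      rw [Finset.mul_sum]; exact Finset.sum_le_sum hrT
    have key : c * ∑ δ ∈ S, nu ψ₂ L δ ≤ ∑ δ ∈ T, nu ψ₂ L δ :=
      np_combine' hcth0 hc0 hc1 np hS hT₁μ hT₂c hT₁0
    have hgc : gceil a ((L.choose H : ℝ))⁻¹ = (K:ℝ) / (L.choose H : ℝ) := by
      rw [gceil, div_inv_eq_mul, hKcl]; field_simp
    have hgoal : s₂ + binomPMF L ψ₂ H * gceil a ((L.choose H : ℝ))⁻¹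
        = ∑ δ ∈ T, nu ψ₂ L δ := by
      rw [hgc, hB₂eq, hT₂]; field_simp
    rw [hgoal]
    have hmain : d * ∑ δ ∈ S, nu ψ₂ L δ ≤ d / c * ∑ δ ∈ T, nu ψ₂ L δ := by
      rw [div_mul_eq_mul_div, le_div_iff₀ hc0]
      calc d * (∑ δ ∈ S, nu ψ₂ L δ) * c = d * (c * ∑ δ ∈ S, nu ψ₂ L δ) := by ring
        _ ≤ d * ∑ δ ∈ T, nu ψ₂ L δ := mul_le_mul_of_nonneg_left key hd0
    linarith
  · have hcase' : ψ₂ ≤ ψ₁ := (not_le.1 hcase).le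
    rw [← hc, ← hd]
    set H : ℕ := sSup {h | h ≤ L ∧ μ ≤ ∑ i ∈ Finset.Icc h L, binomPMF L ψ₁ i} with hH
    have hbdd : BddAbove {h | h ≤ L ∧ μ ≤ ∑ i ∈ Finset.Icc h L, binomPMF L ψ₁ i} :=
      ⟨L, fun h hh => hh.1⟩
    have hIcc0 : Finset.Icc 0 L = Finset.range (L + 1) := by
      rw [← Finset.Ico_add_one_right_eq_Icc, Nat.Ico_zero_eq_range]
    have hne : 0 ∈ {h | h ≤ L ∧ μ ≤ ∑ i ∈ Finset.Icc h L, binomPMF L ψ₁ i} := by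
      refine ⟨Nat.zero_le L, ?_⟩
      rw [hIcc0, sum_binom_one]; exact hμ1
    have Hmem := Nat.sSup_mem (Set.nonempty_of_mem hne) hbdd
    rw [← hH] at Hmem
    obtain ⟨HL, HW⟩ := Hmem
    have hCpos : 0 < L.choose H := Nat.choose_pos HL
    have hCpos' : (0:ℝ) < (L.choose H : ℝ) := by exact_mod_cast hCpos
    have hB₁pos : 0 < binomPMF L ψ₁ H := binom_pos hψ₁0 hψ₁1 HL
    set s₁ : ℝ := ∑ i ∈ Finset.Icc (H + 1) L, binomPMF L ψ₁ i with hs₁def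
    set s₂ : ℝ := ∑ i ∈ Finset.Icc (H + 1) L, binomPMF L ψ₂ i with hs₂def
    have hs₁0 : 0 ≤ s₁ := Finset.sum_nonneg fun i _ => binom_nonneg hψ₁0.le hψ₁1.le L i
    have hs₁μ : s₁ ≤ μ := by
      rcases eq_or_lt_of_le HL with h0 | hpos
      · rw [hs₁def, h0, Finset.Icc_eq_empty (by omega : ¬ L + 1 ≤ L)]
        simpa using hμ0
      · have hnm : H + 1 ∉ {h | h ≤ L ∧ μ ≤ ∑ i ∈ Finset.Icc h L, binomPMF L ψ₁ i} := by
          intro hmem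
          have := le_csSup hbdd hmem
          rw [← hH] at this
          omega
        simp only [Set.mem_setOf_eq, not_and, not_le] at hnm
        have := hnm (by omega)
        rw [hs₁def]; linarith
    have hμs₁B : μ ≤ s₁ + binomPMF L ψ₁ H := by
      have hsplit : ∑ i ∈ Finset.Icc H L, binomPMF L ψ₁ i
          = binomPMF L ψ₁ H + ∑ i ∈ Finset.Icc (H + 1) L, binomPMF L ψ₁ i := by
        rw [Finset.Icc_eq_cons_Ioc HL, Finset.sum_cons, Finset.Icc_add_one_left_eq_Ioc]
      rw [hs₁def]
      calc μ ≤ ∑ i ∈ Finset.Icc H L, binomPMF L ψ₁ i := HW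
        _ = binomPMF L ψ₁ H + ∑ i ∈ Finset.Icc (H + 1) L, binomPMF L ψ₁ i := hsplit
        _ = ∑ i ∈ Finset.Icc (H + 1) L, binomPMF L ψ₁ i + binomPMF L ψ₁ H := by ring
    set b₁ : ℝ := ψ₁ ^ (L - H) * (1 - ψ₁) ^ H with hb₁def
    set b₂ : ℝ := ψ₂ ^ (L - H) * (1 - ψ₂) ^ H with hb₂def
    have hb₁pos : 0 < b₁ := by
      have : (0:ℝ) < 1 - ψ₁ := by linarith
      rw [hb₁def]; positivity
    have hb₂0 : 0 ≤ b₂ := by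
      have : (0:ℝ) ≤ 1 - ψ₂ := by linarith
      rw [hb₂def]; positivity
    have hB₁eq : binomPMF L ψ₁ H = (L.choose H : ℝ) * b₁ := by rw [binomPMF, hb₁def]; ring
    have hB₂eq : binomPMF L ψ₂ H = (L.choose H : ℝ) * b₂ := by rw [binomPMF, hb₂def]; ring
    set a : ℝ := (μ - s₁) / binomPMF L ψ₁ H with hadef
    have ha0 : 0 ≤ a := div_nonneg (by linarith) hB₁pos.le
    have ha1 : a ≤ 1 := by
      rw [hadef, div_le_one hB₁pos]; linarith
    set K : ℕ := (⌈a * (L.choose H : ℝ)⌉).toNat with hKdef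
    have hcl0 : (0:ℤ) ≤ ⌈a * (L.choose H : ℝ)⌉ := Int.ceil_nonneg (by positivity)
    have hKcl : (K:ℝ) = (⌈a * (L.choose H : ℝ)⌉ : ℝ) := by
      rw [hKdef]; exact_mod_cast Int.toNat_of_nonneg hcl0
    have hKge : a * (L.choose H : ℝ) ≤ (K:ℝ) := by
      rw [hKcl]; exact Int.le_ceil _
    have hKC : K ≤ L.choose H := by
      have haC : a * (L.choose H : ℝ) ≤ (L.choose H : ℝ) := by
        calc a * (L.choose H : ℝ) ≤ 1 * (L.choose H : ℝ) :=
              mul_le_mul_of_nonneg_right ha1 hCpos'.le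
          _ = (L.choose H : ℝ) := one_mul _
      have h1 : (⌈a * (L.choose H : ℝ)⌉ : ℤ) ≤ (L.choose H : ℤ) := by
        apply Int.ceil_le.2
        exact_mod_cast haC
      rw [hKdef]
      omega
    obtain ⟨U, hU, hUcard⟩ := Finset.exists_subset_card_eq
      (show K ≤ (Finset.univ.filter fun δ : Fin L → Bool => retained δ = H).card by
        rw [card_lev]; exact hKC)
    set T : Finset (Fin L → Bool) :=
      (Finset.univ.filter fun δ : Fin L → Bool => H < retained δ) ∪ U with hT
    have hdisj : Disjoint (Finset.univ.filter fun δ : Fin L → Bool => H < retained δ) U := by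
      rw [Finset.disjoint_left]
      intro δ h1 h2
      have := hU h2
      simp only [Finset.mem_filter] at this h1
      omega
    have hTsum : ∀ ψ : ℝ, ∑ δ ∈ T, nu ψ L δ
        = (∑ i ∈ Finset.Icc (H + 1) L, binomPMF L ψ i) + K * (ψ ^ (L - H) * (1 - ψ) ^ H) := by
      intro ψ
      rw [hT, Finset.sum_union hdisj, sum_nu_gt, sum_nu_subset ψ L H hU, hUcard]
    have hT₁ : ∑ δ ∈ T, nu ψ₁ L δ = s₁ + K * b₁ := hTsum ψ₁
    have hT₂ : ∑ δ ∈ T, nu ψ₂ L δ = s₂ + K * b₂ := hTsum ψ₂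
    have hT₁μ : μ ≤ ∑ δ ∈ T, nu ψ₁ L δ := by
      rw [hT₁]
      have hKb : a * (L.choose H : ℝ) * b₁ ≤ (K:ℝ) * b₁ :=
        mul_le_mul_of_nonneg_right hKge hb₁pos.le
      have ha' : a * (L.choose H : ℝ) * b₁ = μ - s₁ := by
        rw [hadef, hB₁eq]; field_simp
      linarith
    have hT₁0 : 0 ≤ ∑ δ ∈ T, nu ψ₁ L δ :=
      Finset.sum_nonneg fun δ _ => nu_nonneg hψ₁0.le hψ₁1.le L δ
    set cth : ℝ := b₂ / b₁ with hcth
    have hcth0 : 0 ≤ cth := div_nonneg hb₂0 hb₁pos.le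
    have hrT : ∀ δ ∈ T, cth * nu ψ₁ L δ ≤ nu ψ₂ L δ := by
      intro δ hδ
      have hiH : H ≤ retained δ := by
        rw [hT, Finset.mem_union] at hδ
        rcases hδ with h | h
        · simp only [Finset.mem_filter] at h; omega
        · have := hU h; simp only [Finset.mem_filter] at this; omega
      have := ratio_mono hψ₂0.le hψ₂1.le hψ₁0.le hψ₁1.le hcase' hiH (retained_le δ)
      rw [hcth, div_mul_eq_mul_div, div_le_iff₀ hb₁pos]
      calc b₂ * nu ψ₁ L δ
          = (ψ₂ ^ (L - H) * (1 - ψ₂) ^ H)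
            * (ψ₁ ^ (L - retained δ) * (1 - ψ₁) ^ retained δ) := by rw [nu, hb₂def]; try ring
        _ ≤ (ψ₂ ^ (L - retained δ) * (1 - ψ₂) ^ retained δ)
            * (ψ₁ ^ (L - H) * (1 - ψ₁) ^ H) := this
        _ = nu ψ₂ L δ * b₁ := by rw [nu, hb₁def]; try ring
    have hrT' : ∀ δ ∉ T, nu ψ₂ L δ ≤ cth * nu ψ₁ L δ := by
      intro δ hδ
      have hiH : retained δ ≤ H := by
        by_contra hcon
        push_neg at hcon
        apply hδ
        rw [hT, Finset.mem_union]
        left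
        simp only [Finset.mem_filter]
        exact ⟨Finset.mem_univ δ, hcon⟩
      have := ratio_mono hψ₂0.le hψ₂1.le hψ₁0.le hψ₁1.le hcase' hiH HL
      rw [hcth, div_mul_eq_mul_div, le_div_iff₀ hb₁pos]
      calc nu ψ₂ L δ * b₁
          = (ψ₂ ^ (L - retained δ) * (1 - ψ₂) ^ retained δ)
            * (ψ₁ ^ (L - H) * (1 - ψ₁) ^ H) := by rw [nu, hb₁def]; try ring
        _ ≤ (ψ₂ ^ (L - H) * (1 - ψ₂) ^ H)
            * (ψ₁ ^ (L - retained δ) * (1 - ψ₁) ^ retained δ) := this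
        _ = b₂ * nu ψ₁ L δ := by rw [nu, hb₂def]; try ring
    have np := np_core' S T (nu ψ₁ L) (nu ψ₂ L) cth hrT hrT'
    have hT₂c : cth * ∑ δ ∈ T, nu ψ₁ L δ ≤ ∑ δ ∈ T, nu ψ₂ L δ := by
      rw [Finset.mul_sum]; exact Finset.sum_le_sum hrT
    have key : c * ∑ δ ∈ S, nu ψ₂ L δ ≤ ∑ δ ∈ T, nu ψ₂ L δ :=
      np_combine' hcth0 hc0 hc1 np hS hT₁μ hT₂c hT₁0
    have hgc : gceil a ((L.choose H : ℝ))⁻¹ = (K:ℝ) / (L.choose H : ℝ) := by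
      rw [gceil, div_inv_eq_mul, hKcl]; field_simp
    have hgoal : s₂ + binomPMF L ψ₂ H * gceil a ((L.choose H : ℝ))⁻¹
        = ∑ δ ∈ T, nu ψ₂ L δ := by
      rw [hgc, hB₂eq, hT₂]; field_simp
    rw [hgoal]
    have hmain : d * ∑ δ ∈ S, nu ψ₂ L δ ≤ d / c * ∑ δ ∈ T, nu ψ₂ L δ := by
      rw [div_mul_eq_mul_div, le_div_iff₀ hc0]
      calc d * (∑ δ ∈ S, nu ψ₂ L δ) * c = d * (c * ∑ δ ∈ S, nu ψ₂ L δ) := by ring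
        _ ≤ d * ∑ δ ∈ T, nu ψ₂ L δ := mul_le_mul_of_nonneg_left key hd0
    linarith

lemma smoothedProb_eq_sum {Ω Y : Type*} [DecidableEq Y] (f : List Ω → Y) (y : Y) (ψ : ℝ)
    (z : List Ω) :
    smoothedProb f y ψ z
      = ∑ δ ∈ Finset.univ.filter fun δ : Fin z.length → Bool => f (applyDel z δ) = y,
          nu ψ z.length δ := by
  rw [smoothedProb, Finset.sum_filter]
  apply Finset.sum_congr rfl
  intro δ _
  rw [score, qdel]
  split <;> simp [nu]

lemma exists_isLCS {Ω : Type*} (x xt : List Ω) : ∃ z : List Ω, IsLCS z x xt := by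
  set P : Set ℕ := {k | ∃ w : List Ω, w.Sublist x ∧ w.Sublist xt ∧ w.length = k} with hP
  have h0 : 0 ∈ P := ⟨[], List.nil_sublist x, List.nil_sublist xt, rfl⟩
  have hbdd : BddAbove P := ⟨x.length, fun k hk => by
    obtain ⟨w, h1, _, h3⟩ := hk
    exact h3 ▸ h1.length_le⟩
  obtain ⟨w, hw1, hw2, hw3⟩ := Nat.sSup_mem (Set.nonempty_of_mem h0) hbdd
  exact ⟨w, hw1, hw2, fun v hv1 hv2 => hw3 ▸ le_csSup hbdd ⟨v, hv1, hv2, rfl⟩⟩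

end Stmt16

/-- certified edit-distance robustness for length-dependent deletion. -/
theorem stmt16 {Ω Y : Type*} [DecidableEq Y]
    (ψ : ℕ → ℝ) (hψ : ∀ n, ψ n ∈ Set.Ioo (0 : ℝ) 1)
    (f : List Ω → Y) (x : List Ω) (y₁ : Y) (r : ℕ) (o : Set EditOp)
    (hcert : ∀ xt : List Ω, EditWithin o r x xt →
      ∀ zs : List Ω, IsLCS zs x xt →
      ∀ y : Y, y ≠ y₁ →
        ub (smoothedProb f y (ψ x.length) x) x.length xt.length zs.length
            (ψ x.length) (ψ xt.length) <
          lb (smoothedProb f y₁ (ψ x.length) x) x.length xt.length zs.length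
            (ψ x.length) (ψ xt.length)) :
    ∀ xt : List Ω, EditWithin o r x xt → ∀ y : Y, y ≠ y₁ →
      smoothedProb f y (ψ xt.length) xt < smoothedProb f y₁ (ψ xt.length) xt := by
  open Stmt16 in
  intro xt hxt y hy
  obtain ⟨z, hz⟩ := exists_isLCS x xt
  have hlt := hcert xt hxt z hz y hy
  obtain ⟨hz1, hz2, -⟩ := hz
  set ψ₁ : ℝ := ψ x.length with hψ₁def
  set ψ₂ : ℝ := ψ xt.length with hψ₂def
  have hψ₁ := hψ x.length
  have hψ₂ := hψ xt.length
  rw [← hψ₁def] at hψ₁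
  rw [← hψ₂def] at hψ₂
  -- lower chain
  have hlb : lb (smoothedProb f y₁ ψ₁ x) x.length xt.length z.length ψ₁ ψ₂
      ≤ smoothedProb f y₁ ψ₂ xt := by
    have h1 : smoothedProb f y₁ ψ₁ x - 1 + ψ₁ ^ (x.length - z.length)
        ≤ ψ₁ ^ (x.length - z.length) * ∑ δ ∈ Finset.univ.filter (fun δ : Fin z.length → Bool => f (applyDel z δ) = y₁), nu ψ₁ z.length δ := by
      have hA := factA hψ₁.1.le hψ₁.2.le hz1 f y₁
      rw [smoothedProb_eq_sum f y₁ ψ₁ z] at hA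
      linarith
    have h2 := lb_le hψ₁ hψ₂ x.length xt.length z.length (smoothedProb f y₁ ψ₁ x)
      (smoothedProb_le_one f y₁ hψ₁.1.le hψ₁.2.le x) _ h1
    have h3 : ψ₂ ^ (xt.length - z.length) * ∑ δ ∈ Finset.univ.filter (fun δ : Fin z.length → Bool => f (applyDel z δ) = y₁), nu ψ₂ z.length δ ≤ smoothedProb f y₁ ψ₂ xt := by
      have hB := factB hψ₂.1.le hψ₂.2.le hz2 f y₁
      rw [smoothedProb_eq_sum f y₁ ψ₂ z] at hB
      exact hB
    linarith
  -- upper chain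
  have hub : smoothedProb f y ψ₂ xt
      ≤ ub (smoothedProb f y ψ₁ x) x.length xt.length z.length ψ₁ ψ₂ := by
    have h1 : ψ₁ ^ (x.length - z.length) * ∑ δ ∈ Finset.univ.filter (fun δ : Fin z.length → Bool => f (applyDel z δ) = y), nu ψ₁ z.length δ ≤ smoothedProb f y ψ₁ x := by
      have hB := factB hψ₁.1.le hψ₁.2.le hz1 f y
      rw [smoothedProb_eq_sum f y ψ₁ z] at hB
      exact hB
    have h2 := ub_le hψ₁ hψ₂ x.length xt.length z.length (smoothedProb f y ψ₁ x)
      (smoothedProb_nonneg f y hψ₁.1.le hψ₁.2.le x)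
      (smoothedProb_le_one f y hψ₁.1.le hψ₁.2.le x) _ h1
    have h3 : smoothedProb f y ψ₂ xt
        ≤ ψ₂ ^ (xt.length - z.length) * ∑ δ ∈ Finset.univ.filter (fun δ : Fin z.length → Bool => f (applyDel z δ) = y), nu ψ₂ z.length δ + 1 - ψ₂ ^ (xt.length - z.length) := by
      have hA := factA hψ₂.1.le hψ₂.2.le hz2 f y
      rw [smoothedProb_eq_sum f y ψ₂ z] at hA
      linarith
    linarith
  linarith
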